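/- The sum over all positive integers m of 1/|GL₂(ℤ/mℤ)| equals the Euler product over all primes ℓ of (1 + ℓ³/((ℓ−1)(ℓ²−1)(ℓ⁴−1))), and this product converges. -/

import Mathlib

open Function

noncomputable def unitsEquivIsUnit (M : Type*) [Monoid M] : Mˣ ≃ {x : M // IsUnit x} where
  toFun u := ⟨u, u.isUnit⟩
  invFun x := x.2.unit
  left_inv u := Units.ext u.isUnit.unit_spec
  right_inv x := Subtype.ext x.2.unit_spec

/-- fibers of a surjective additive hom all have the cardinality of the kernel-fiber -/
lemma fiber_card {α β : Type*} [AddCommGroup α] [AddCommGroup β] (f : α →+ β)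
    (hf : Surjective f) (b : β) :
    Nat.card {a : α // f a = b} = Nat.card {a : α // f a = 0} := by
  obtain ⟨a₀, ha₀⟩ := hf b
  apply Nat.card_congr
  refine ⟨fun x => ⟨x.1 - a₀, by simp [x.2, ha₀]⟩, fun y => ⟨y.1 + a₀, by
    have := y.2; simp [this, ha₀]⟩, fun x => by simp, fun y => by simp⟩

/-- master counting lemma -/
lemma card_subtype_comp_mul {α β : Type*} [AddCommGroup α] [AddCommGroup β]
    [Fintype α] [Fintype β] (f : α →+ β) (hf : Surjective f) (p : β → Prop) :
    Nat.card {a : α // p (f a)} * Nat.card β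
      = Nat.card {b : β // p b} * Nat.card α := by
  classical
  have key : ∀ q : β → Prop, Nat.card {a : α // q (f a)}
      = Nat.card {b : β // q b} * Nat.card {a : α // f a = 0} := by
    intro q
    have e1 : {a : α // q (f a)} ≃ Σ y : {b : β // q b}, {a : α // f a = y.1} := by
      refine (Equiv.sigmaFiberEquiv (fun a : {a : α // q (f a)} =>
        (⟨f a.1, a.2⟩ : {b : β // q b}))).symm.trans (Equiv.sigmaCongrRight fun y => ?_)
      exact ⟨fun x => ⟨x.1.1, congrArg Subtype.val x.2⟩,
        fun a => ⟨⟨a.1, by rw [a.2]; exact y.2⟩, Subtype.ext a.2⟩,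
        fun x => Subtype.ext (Subtype.ext rfl), fun a => Subtype.ext rfl⟩
    rw [Nat.card_congr e1]
    rw [Nat.card_eq_fintype_card, Fintype.card_sigma]
    have : ∀ y : {b : β // q b}, Fintype.card {a : α // f a = y.1}
        = Nat.card {a : α // f a = 0} := fun y => by
      rw [← Nat.card_eq_fintype_card, fiber_card f hf]
    simp_rw [this]
    rw [Finset.sum_const, Finset.card_univ, smul_eq_mul, Nat.card_eq_fintype_card,
      Nat.card_eq_fintype_card]
  have h1 := key p
  have h2 := key (fun _ => True)
  simp only [Nat.card_eq_fintype_card (α := {a : α // True})] at h2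
  have hα : Nat.card {a : α // (fun _ => True) (f a)} = Nat.card α := by
    apply Nat.card_congr; exact Equiv.subtypeUnivEquiv (fun _ => trivial)
  have hβ : Nat.card {b : β // (fun _ : β => True) b} = Nat.card β := by
    apply Nat.card_congr; exact Equiv.subtypeUnivEquiv (fun _ => trivial)
  rw [h1]
  have h2' : Nat.card α = Nat.card β * Nat.card {a : α // f a = 0} := by
    rw [← hα, key (fun _ => True), hβ]
  rw [h2']; ring

section PrimePow
variable {ℓ : ℕ} (hℓ : ℓ.Prime) {e : ℕ} (he : 0 < e)
include hℓ he

lemma isUnit_iff_cast (x : ZMod (ℓ^e)) :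
    IsUnit x ↔ IsUnit (ZMod.castHom (dvd_pow_self ℓ he.ne') (ZMod ℓ) x) := by
  haveI : NeZero (ℓ^e) := ⟨pow_ne_zero e hℓ.pos.ne'⟩
  haveI : NeZero ℓ := ⟨hℓ.pos.ne'⟩
  have hx : x = ((x.val : ℕ) : ZMod (ℓ^e)) := (ZMod.natCast_rightInverse x).symm
  rw [hx, map_natCast, ZMod.isUnit_iff_coprime, ZMod.isUnit_iff_coprime,
    Nat.coprime_pow_right_iff he]

lemma isUnit_matrix_iff_cast (A : Matrix (Fin 2) (Fin 2) (ZMod (ℓ^e))) :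
    IsUnit A ↔ IsUnit ((ZMod.castHom (dvd_pow_self ℓ he.ne') (ZMod ℓ)).mapMatrix A) := by
  rw [Matrix.isUnit_iff_isUnit_det, Matrix.isUnit_iff_isUnit_det,
    ← RingHom.map_det, ← isUnit_iff_cast hℓ he]

lemma card_GL_zmod_prime_pow :
    Nat.card (GL (Fin 2) (ZMod (ℓ^e))) = ℓ^(4*(e-1)) * ((ℓ^2-1)*(ℓ^2-ℓ)) := by
  haveI : NeZero (ℓ^e) := ⟨pow_ne_zero e hℓ.pos.ne'⟩
  haveI : NeZero ℓ := ⟨hℓ.pos.ne'⟩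
  haveI : Fact ℓ.Prime := ⟨hℓ⟩
  set π := ZMod.castHom (dvd_pow_self ℓ he.ne') (ZMod ℓ) with hπ
  set f : Matrix (Fin 2) (Fin 2) (ZMod (ℓ^e)) →+ Matrix (Fin 2) (Fin 2) (ZMod ℓ) :=
    (π.mapMatrix (m := Fin 2)).toAddMonoidHom with hf
  have hfs : Function.Surjective f := by
    intro B
    refine ⟨Matrix.of (fun i j => (((B i j).val : ℕ) : ZMod (ℓ^e))), ?_⟩
    ext i j
    simp only [hf, RingHom.toAddMonoidHom_eq_coe, AddMonoidHom.coe_coe, RingHom.mapMatrix_apply,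
      Matrix.map_apply, Matrix.of_apply, map_natCast]
    exact ZMod.natCast_rightInverse _
  have key := card_subtype_comp_mul f hfs IsUnit
  have e1 : Nat.card (GL (Fin 2) (ZMod (ℓ^e)))
      = Nat.card {A : Matrix (Fin 2) (Fin 2) (ZMod (ℓ^e)) // IsUnit (f A)} := by
    rw [Nat.card_congr (unitsEquivIsUnit (Matrix (Fin 2) (Fin 2) (ZMod (ℓ^e))))]
    exact Nat.card_congr (Equiv.subtypeEquivRight (fun A => isUnit_matrix_iff_cast hℓ he A))
  have e2 : Nat.card {B : Matrix (Fin 2) (Fin 2) (ZMod ℓ) // IsUnit B}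
      = (ℓ^2-1)*(ℓ^2-ℓ) := by
    rw [← Nat.card_congr (unitsEquivIsUnit (Matrix (Fin 2) (Fin 2) (ZMod ℓ)))]
    have := Matrix.card_GL_field (𝔽 := ZMod ℓ) 2
    simp only [ZMod.card] at this
    rw [show Nat.card (Matrix (Fin 2) (Fin 2) (ZMod ℓ))ˣ = Nat.card (GL (Fin 2) (ZMod ℓ)) from rfl,
      this, Fin.prod_univ_two]
    norm_num
  have cardM : ∀ (n : ℕ) [NeZero n], Nat.card (Matrix (Fin 2) (Fin 2) (ZMod n)) = n^4 := by
    intro n _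
    rw [show Matrix (Fin 2) (Fin 2) (ZMod n) = (Fin 2 → Fin 2 → ZMod n) from rfl,
      Nat.card_fun, Nat.card_fun, Nat.card_zmod, Nat.card_eq_fintype_card, Fintype.card_fin,
      ← pow_mul]
  rw [cardM, cardM, e2] at key
  rw [e1]
  have hcancel : Nat.card {A : Matrix (Fin 2) (Fin 2) (ZMod (ℓ^e)) // IsUnit (f A)} * ℓ^4
      = (ℓ^(4*(e-1)) * ((ℓ^2-1)*(ℓ^2-ℓ))) * ℓ^4 := by
    rw [key]
    have : (ℓ^e)^4 = ℓ^(4*(e-1)) * ℓ^4 := by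
      rw [← pow_mul, ← pow_add]
      congr 1
      omega
    rw [this]; ring
  exact Nat.eq_of_mul_eq_mul_right (pow_pos hℓ.pos 4) hcancel

end PrimePow

section Mul

/-- Matrices over a product ring. -/
noncomputable def matrixProdRingEquiv (A B : Type*) [CommRing A] [CommRing B] :
    Matrix (Fin 2) (Fin 2) (A × B) ≃+* Matrix (Fin 2) (Fin 2) A × Matrix (Fin 2) (Fin 2) B := by
  refine RingEquiv.ofBijective
    (((RingHom.fst A B).mapMatrix).prod ((RingHom.snd A B).mapMatrix)) ⟨?_, ?_⟩
  · intro M N h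
    ext i j
    · exact congrFun (congrFun (congrArg Prod.fst h) i) j
    · exact congrFun (congrFun (congrArg Prod.snd h) i) j
  · rintro ⟨P, Q⟩
    refine ⟨Matrix.of (fun i j => (P i j, Q i j)), ?_⟩
    refine Prod.ext ?_ ?_ <;> ext i j <;> rfl

lemma card_GL_mul {m n : ℕ} (h : m.Coprime n) :
    Nat.card (GL (Fin 2) (ZMod (m*n)))
      = Nat.card (GL (Fin 2) (ZMod m)) * Nat.card (GL (Fin 2) (ZMod n)) := by
  have E : GL (Fin 2) (ZMod (m*n)) ≃* (GL (Fin 2) (ZMod m)) × (GL (Fin 2) (ZMod n)) :=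
    (Units.mapEquiv (((ZMod.chineseRemainder h).mapMatrix.trans
      (matrixProdRingEquiv (ZMod m) (ZMod n))).toMulEquiv)).trans MulEquiv.prodUnits
  rw [Nat.card_congr E.toEquiv, Nat.card_prod]

lemma card_GL_lower {n : ℕ} (hn : 0 < n) :
    n^2 ≤ Nat.card (GL (Fin 2) (ZMod n)) := by
  haveI : NeZero n := ⟨hn.ne'⟩
  have hdet : ∀ x y : ZMod n, IsUnit (Matrix.det !![1+x*y, x; y, 1]) := by
    intro x y
    rw [Matrix.det_fin_two_of]
    simp [add_mul, mul_comm]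
  set g : ZMod n × ZMod n → GL (Fin 2) (ZMod n) :=
    fun p => ((Matrix.isUnit_iff_isUnit_det _).2 (hdet p.1 p.2)).unit with hg
  have hginj : Function.Injective g := by
    intro p q hpq
    have : (g p).val = (g q).val := congrArg Units.val hpq
    simp only [hg, IsUnit.unit_spec] at this
    have h1 : p.1 = q.1 := congrFun (congrFun this 0) 1
    have h2 : p.2 = q.2 := congrFun (congrFun this 1) 0
    exact Prod.ext h1 h2
  calc n^2 = Nat.card (ZMod n × ZMod n) := by rw [Nat.card_prod, Nat.card_zmod]; ring
  _ ≤ Nat.card (GL (Fin 2) (ZMod n)) := Nat.card_le_card_of_injective g hginj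

lemma card_GL_zero : Nat.card (GL (Fin 2) (ZMod 0)) = 0 := by
  have hdet : ∀ k : ℤ, Matrix.det !![1, k; 0, 1] = 1 := by
    intro k; rw [Matrix.det_fin_two_of]; ring
  set g : ℤ → GL (Fin 2) (ZMod 0) := fun k =>
    ((Matrix.isUnit_iff_isUnit_det (!![1, k; 0, 1] : Matrix (Fin 2) (Fin 2) ℤ)).2 (by rw [hdet]; exact isUnit_one)).unit with hg
  have hginj : Function.Injective g := by
    intro p q hpq
    have : (g p).val = (g q).val := congrArg Units.val hpq
    simp only [hg, IsUnit.unit_spec] at this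
    exact congrFun (congrFun this 0) 1
  haveI : Infinite (GL (Fin 2) (ZMod 0)) := Infinite.of_injective g hginj
  exact Nat.card_eq_zero_of_infinite

end Mul

noncomputable def fGL : ℕ → ℝ := fun m => 1 / (Nat.card (GL (Fin 2) (ZMod m)) : ℝ)

lemma fGL_zero : fGL 0 = 0 := by simp [fGL, card_GL_zero]

lemma card_GL_one : Nat.card (GL (Fin 2) (ZMod 1)) = 1 := by
  haveI : Subsingleton (GL (Fin 2) (ZMod 1)) := by
    constructor; intro a b
    exact Units.ext (Subsingleton.elim _ _)
  haveI := uniqueOfSubsingleton (1 : GL (Fin 2) (ZMod 1))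
  exact Nat.card_unique

lemma fGL_one : fGL 1 = 1 := by simp [fGL, card_GL_one]

lemma fGL_nonneg (n : ℕ) : 0 ≤ fGL n := by unfold fGL; positivity

lemma fGL_mul {m n : ℕ} (h : m.Coprime n) : fGL (m*n) = fGL m * fGL n := by
  unfold fGL
  rw [card_GL_mul h, Nat.cast_mul, one_div, mul_inv, one_div, one_div]

lemma fGL_le (n : ℕ) : fGL n ≤ 1 / (n:ℝ)^2 := by
  rcases Nat.eq_zero_or_pos n with rfl | hn
  · simp [fGL_zero]
  · unfold fGL
    apply one_div_le_one_div_of_le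
    · positivity
    · exact_mod_cast card_GL_lower hn

lemma fGL_summable : Summable (fun n => ‖fGL n‖) := by
  have : ∀ n : ℕ, ‖fGL n‖ = fGL n := fun n => Real.norm_of_nonneg (fGL_nonneg n)
  simp_rw [this]
  apply Summable.of_nonneg_of_le fGL_nonneg fGL_le
  exact (Real.summable_one_div_nat_pow (p := 2)).2 one_lt_two

lemma fGL_prime_pow {p : ℕ} (hp : p.Prime) (e : ℕ) :
    fGL (p^(e+1)) = (1 / (((p:ℝ)^2-1)*((p:ℝ)^2-p))) * ((1/(p:ℝ)^4)^e) := by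
  unfold fGL
  rw [card_GL_zmod_prime_pow hp (Nat.succ_pos e), show 4*(e+1-1) = 4*e from by omega]
  have h1 : (1:ℕ) ≤ p^2 := Nat.one_le_two_pow.trans (Nat.pow_le_pow_left hp.two_le 2)
  have h2 : p ≤ p^2 := by nlinarith [hp.two_le]
  push_cast [Nat.cast_sub h1, Nat.cast_sub h2]
  have hp0 : (0:ℝ) < p := by exact_mod_cast hp.pos
  have ha : ((p:ℝ)^2-1) ≠ 0 := by nlinarith [show (2:ℝ) ≤ p by exact_mod_cast hp.two_le]
  have hb : ((p:ℝ)^2-(p:ℝ)) ≠ 0 := by nlinarith [show (2:ℝ) ≤ p by exact_mod_cast hp.two_le]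
  rw [div_pow, one_pow, ← pow_mul, div_mul_div_comm, one_mul,
    mul_comm ((p:ℝ)^2-1) ((p:ℝ)^2-(p:ℝ))]
  rw [mul_comm ((p:ℝ)^(4*e))]

lemma fGL_local (p : ℕ) (hp : p.Prime) :
    ∑' e : ℕ, fGL (p^e)
      = 1 + (p:ℝ)^3 / (((p:ℝ)-1) * ((p:ℝ)^2-1) * ((p:ℝ)^4-1)) := by
  have hP : (2:ℝ) ≤ (p:ℝ) := by exact_mod_cast hp.two_le
  have hsum : Summable (fun e : ℕ => fGL (p^e)) :=
    fGL_summable.of_norm.comp_injective (Nat.pow_right_injective hp.two_le)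
  rw [Summable.tsum_eq_zero_add hsum]
  simp only [pow_zero, fGL_one]
  have : ∀ e : ℕ, fGL (p^(e+1)) = (1 / (((p:ℝ)^2-1)*((p:ℝ)^2-p))) * ((1/(p:ℝ)^4)^e) :=
    fGL_prime_pow hp
  simp_rw [this]
  have hP1 : (1:ℝ) < (p:ℝ) := by linarith
  have hP4 : (1:ℝ) < (p:ℝ)^4 := one_lt_pow₀ hP1 (by norm_num)
  have hP2 : (1:ℝ) < (p:ℝ)^2 := one_lt_pow₀ hP1 (by norm_num)
  rw [tsum_mul_left, tsum_geometric_of_lt_one (by positivity) (by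
    rw [one_div]
    exact inv_lt_one_of_one_lt₀ hP4)]
  congr 1
  have h4 : ((p:ℝ)^4 - 1) ≠ 0 := sub_ne_zero_of_ne hP4.ne'
  have h2 : ((p:ℝ)^2 - 1) ≠ 0 := sub_ne_zero_of_ne hP2.ne'
  have h1 : ((p:ℝ) - 1) ≠ 0 := sub_ne_zero_of_ne hP1.ne'
  have hp0 : (p:ℝ) ≠ 0 := by positivity
  have h5 : (1:ℝ) - 1/(p:ℝ)^4 ≠ 0 := by
    have : 1/(p:ℝ)^4 < 1 := by rw [one_div]; exact inv_lt_one_of_one_lt₀ hP4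
    linarith
  have hb : ((p:ℝ)^2-(p:ℝ)) ≠ 0 := by nlinarith
  field_simp


/-- The idealized constant `C_{τ(d₁)}`: the sum over all positive integers `m` of
`1/|GL₂(ℤ/mℤ)|` equals the Euler product over primes `ℓ` of
`1 + ℓ³/((ℓ−1)(ℓ²−1)(ℓ⁴−1))`, and this product converges. -/
theorem stmt_3 :
    Multipliable (fun ℓ : Nat.Primes =>
      (1 + (ℓ : ℝ) ^ 3 / (((ℓ : ℝ) - 1) * ((ℓ : ℝ) ^ 2 - 1) * ((ℓ : ℝ) ^ 4 - 1)))) ∧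
    ∑' m : ℕ+, (1 : ℝ) / (Nat.card (GL (Fin 2) (ZMod m)) : ℝ) =
      ∏' ℓ : Nat.Primes,
        (1 + (ℓ : ℝ) ^ 3 / (((ℓ : ℝ) - 1) * ((ℓ : ℝ) ^ 2 - 1) * ((ℓ : ℝ) ^ 4 - 1))) := by
  have EP := EulerProduct.eulerProduct_hasProd (f := fGL) fGL_one (fun {m n} h => fGL_mul h)
    fGL_summable fGL_zero
  have hfn : (fun p : Nat.Primes => ∑' e : ℕ, fGL ((p:ℕ)^e))
      = fun ℓ : Nat.Primes =>
        (1 + (ℓ : ℝ) ^ 3 / (((ℓ : ℝ) - 1) * ((ℓ : ℝ) ^ 2 - 1) * ((ℓ : ℝ) ^ 4 - 1))) := by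
    funext ℓ
    exact fGL_local ℓ ℓ.2
  rw [hfn] at EP
  constructor
  · exact EP.multipliable
  · have hsupp : Function.support fGL ⊆ Set.range ((↑·) : ℕ+ → ℕ) := by
      intro x hx
      rcases Nat.eq_zero_or_pos x with rfl | hxpos
      · simp [Function.mem_support, fGL_zero] at hx
      · exact ⟨⟨x, hxpos⟩, rfl⟩
    have h1 : ∑' m : ℕ+, (1 : ℝ) / (Nat.card (GL (Fin 2) (ZMod m)) : ℝ)
        = ∑' n : ℕ, fGL n :=
      Function.Injective.tsum_eq (g := ((↑·) : ℕ+ → ℕ)) (f := fGL)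
        (fun a b h => PNat.coe_injective h) hsupp
    exact h1.trans EP.tprod_eq.symm
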